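/- Let S be a quasi-thin association scheme over a field F of characteristic ≠ 2. Then the Terwilliger F-algebra T of S with respect to any vertex is semisimple (its Jacobson radical is zero). -/

import Mathlib

open scoped Classical

/-- An association scheme on a finite set `X` with `d + 1` relations. -/
structure AssocScheme (X : Type) [Fintype X] (d : ℕ) where
  /-- the relations `R_0, …, R_d` -/
  R : Fin (d + 1) → X → X → Prop
  rel_nonempty : ∀ i, ∃ x y, R i x y
  partition : ∀ x y, ∃! i, R i x y
  diag : ∀ x y, R 0 x y ↔ x = y
  /-- the transpose involution `a ↦ a'` -/
  inv : Fin (d + 1) → Fin (d + 1)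
  inv_spec : ∀ i x y, R (inv i) x y ↔ R i y x
  /-- the intersection numbers `p_{ij}^k` -/
  p : Fin (d + 1) → Fin (d + 1) → Fin (d + 1) → ℕ
  p_spec : ∀ i j k x y, R k x y → {z | R i x z ∧ R j z y}.ncard = p i j k

namespace AssocScheme

variable {X : Type} [Fintype X] [DecidableEq X] {d : ℕ}

/-- the valency `k_a = p_{a a'}^0` -/
def k (S : AssocScheme X d) (a : Fin (d + 1)) : ℕ := S.p a (S.inv a) 0

/-- `|R_a R_b|`, the number of relations in the complex product -/
def nProd (S : AssocScheme X d) (a b : Fin (d + 1)) : ℕ :=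
  (Finset.univ.filter fun c => 0 < S.p a b c).card

/-- the adjacency matrix of `R_b` over `F` -/
noncomputable def adj (S : AssocScheme X d) (F : Type) [Field F] (b : Fin (d + 1)) :
    Matrix X X F :=
  Matrix.of fun u v => if S.R b u v then 1 else 0

/-- the dual idempotent `E_a^*(x)` -/
noncomputable def dualIdem (S : AssocScheme X d) (F : Type) [Field F] (x : X)
    (a : Fin (d + 1)) : Matrix X X F :=
  Matrix.diagonal fun u => if S.R a x u then 1 else 0

/-- the Terwilliger `F`-algebra of `S` with respect to the vertex `x` -/
noncomputable def Terw (S : AssocScheme X d) (F : Type) [Field F] (x : X) :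
    Subalgebra F (Matrix X X F) :=
  Algebra.adjoin F (Set.range (S.adj F) ∪ Set.range (S.dualIdem F x))

/-- the all-ones matrix -/
def allOnes (X : Type) (F : Type) [Field F] : Matrix X X F := Matrix.of fun _ _ => 1

end AssocScheme

open AssocScheme

namespace AssocScheme

set_option linter.unusedSectionVars false

variable {X : Type} [Fintype X] [DecidableEq X] {d : ℕ} (S : AssocScheme X d)

lemma rel_eq {a b : Fin (d+1)} {u v : X} (ha : S.R a u v) (hb : S.R b u v) : a = b := by
  obtain ⟨j, -, hj⟩ := S.partition u v
  exact (hj a ha).trans (hj b hb).symm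

lemma not_R_self {b : Fin (d+1)} (hb : b ≠ 0) (u : X) : ¬ S.R b u u := fun h =>
  hb (S.rel_eq h ((S.diag u u).mpr rfl))

lemma fiber_ncard (x : X) (i : Fin (d+1)) : {z | S.R i x z}.ncard = S.k i := by
  have h := S.p_spec i (S.inv i) 0 x x ((S.diag x x).mpr rfl)
  rw [k, ← h]
  congr 1
  ext z
  simp only [Set.mem_setOf_eq, S.inv_spec, and_self]

lemma fiber_eq_pair (x : X) {i : Fin (d+1)} {a c : X} (hqt : S.k i ≤ 2)
    (ha : S.R i x a) (hc : S.R i x c) (hac : a ≠ c) : {z | S.R i x z} = {a, c} := by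
  refine (Set.eq_of_subset_of_ncard_le ?_ ?_ (Set.toFinite _)).symm
  · intro z hz
    rcases hz with rfl | rfl
    exacts [ha, hc]
  · rw [Set.ncard_pair hac, S.fiber_ncard x i]
    exact hqt

lemma swap_rel (x : X) {i b : Fin (d+1)} {a c : X} (hqt : S.k i ≤ 2)
    (ha : S.R i x a) (hc : S.R i x c) (hac : a ≠ c) (hb : S.R b a c) : S.R b c a := by
  have hb0 : b ≠ 0 := fun h => hac ((S.diag a c).mp (h ▸ hb))
  have hpair := S.fiber_eq_pair x hqt ha hc hac
  have h1 : {z | S.R b a z ∧ S.R (S.inv i) z x}.ncard = S.p b (S.inv i) (S.inv i) :=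
    S.p_spec b (S.inv i) (S.inv i) a x ((S.inv_spec i a x).mpr ha)
  have hA : {z | S.R b a z ∧ S.R (S.inv i) z x} = {c} := by
    ext z
    simp only [Set.mem_setOf_eq, Set.mem_singleton_iff]
    constructor
    · rintro ⟨hz1, hz2⟩
      have hz3 : z ∈ ({a, c} : Set X) := hpair ▸ (S.inv_spec i z x).mp hz2
      rcases hz3 with rfl | rfl
      · exact absurd hz1 (S.not_R_self hb0 z)
      · rfl
    · rintro rfl
      exact ⟨hb, (S.inv_spec i _ x).mpr hc⟩
  rw [hA, Set.ncard_singleton] at h1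
  have h2 : {z | S.R b c z ∧ S.R (S.inv i) z x}.ncard = 1 :=
    (S.p_spec b (S.inv i) (S.inv i) c x ((S.inv_spec i c x).mpr hc)).trans h1.symm
  obtain ⟨z, hz⟩ := Set.ncard_eq_one.mp h2
  have hzm : z ∈ {z | S.R b c z ∧ S.R (S.inv i) z x} := hz ▸ Set.mem_singleton z
  obtain ⟨hz1, hz2⟩ := hzm
  have hz3 : z ∈ ({a, c} : Set X) := hpair ▸ (S.inv_spec i z x).mp hz2
  rcases hz3 with rfl | rfl
  · exact hz1
  · exact absurd hz1 (S.not_R_self hb0 z)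

variable (F : Type) [Field F] (x : X)

lemma dualIdem_mem (a : Fin (d+1)) : S.dualIdem F x a ∈ S.Terw F x :=
  Algebra.subset_adjoin (Set.mem_union_right _ ⟨a, rfl⟩)

lemma adj_mem (b : Fin (d+1)) : S.adj F b ∈ S.Terw F x :=
  Algebra.subset_adjoin (Set.mem_union_left _ ⟨b, rfl⟩)

lemma sandwich_mem (i b : Fin (d+1)) :
    S.dualIdem F x i * S.adj F b * S.dualIdem F x i ∈ S.Terw F x :=
  mul_mem (mul_mem (S.dualIdem_mem F x i) (S.adj_mem F x b)) (S.dualIdem_mem F x i)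

lemma isotropic_zero (hqt : ∀ a, S.k a ≤ 2) (hchar : ringChar F ≠ 2) (w : X → F)
    (hw : ∀ A ∈ S.Terw F x, dotProduct w (A.mulVec w) = 0) : w = 0 := by
  funext u
  obtain ⟨i, hiu, -⟩ := S.partition x u
  -- the diagonal equation
  have e1 : ∑ z, (if S.R i x z then w z * w z else (0:F)) = 0 := by
    have h := hw (S.dualIdem F x i) (S.dualIdem_mem F x i)
    have key : dotProduct w ((S.dualIdem F x i).mulVec w)
        = ∑ z, (if S.R i x z then w z * w z else (0:F)) := by
      simp only [dotProduct, dualIdem, Matrix.mulVec_diagonal]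
      refine Finset.sum_congr rfl fun z _ => ?_
      split_ifs with hz <;> ring
    rw [key] at h
    exact h
  by_cases hex : ∀ z, S.R i x z → z = u
  · -- fiber is {u}
    have e1' : ∑ z ∈ ({u} : Finset X), (if S.R i x z then w z * w z else (0:F)) = 0 := by
      rw [Finset.sum_subset (Finset.subset_univ {u}) ?_]
      · exact e1
      · intro z _ hz
        rw [if_neg]
        intro hr
        exact hz (Finset.mem_singleton.mpr (hex z hr))
    rw [Finset.sum_singleton, if_pos hiu] at e1'
    exact mul_self_eq_zero.mp e1'
  · -- fiber is {u, c}
    push_neg at hex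
    obtain ⟨c, hcR, hcu⟩ := hex
    have huc : u ≠ c := fun h => hcu h.symm
    have hpair := S.fiber_eq_pair x (hqt i) hiu hcR huc
    have hnotin : ∀ s : X, s ∉ ({u, c} : Finset X) → ¬ S.R i x s := by
      intro s hs hr
      have : s ∈ ({u, c} : Set X) := hpair ▸ hr
      simp only [Set.mem_insert_iff, Set.mem_singleton_iff] at this
      simp only [Finset.mem_insert, Finset.mem_singleton] at hs
      exact hs this
    -- equation 1 on the pair
    have e1' : w u * w u + w c * w c = 0 := by
      have hsub : (∑ z ∈ ({u, c} : Finset X), (if S.R i x z then w z * w z else (0:F)))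
          = ∑ z, (if S.R i x z then w z * w z else (0:F)) :=
        Finset.sum_subset (Finset.subset_univ _) (fun z _ hz => if_neg (hnotin z hz))
      rw [Finset.sum_pair huc, if_pos hiu, if_pos hcR, e1] at hsub
      exact hsub
    -- the swap relation
    obtain ⟨b, hbuc, -⟩ := S.partition u c
    have hb0 : b ≠ 0 := fun h => huc ((S.diag u c).mp (h ▸ hbuc))
    have hbcu : S.R b c u := S.swap_rel x (hqt i) hiu hcR huc hbuc
    -- equation 2
    have e2 : w u * w c + w c * w u = 0 := by
      have h := hw _ (S.sandwich_mem F x i b)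
      have hM : ∀ s t : X, (S.dualIdem F x i * S.adj F b * S.dualIdem F x i) s t
          = (if S.R i x s then (1:F) else 0) * ((if S.R b s t then (1:F) else 0) *
            (if S.R i x t then (1:F) else 0)) := by
        intro s t
        simp only [dualIdem, adj, Matrix.mul_diagonal, Matrix.diagonal_mul, Matrix.of_apply]
        ring
      have hdot : dotProduct w ((S.dualIdem F x i * S.adj F b * S.dualIdem F x i).mulVec w)
          = ∑ s, ∑ t, (if S.R i x s ∧ S.R i x t ∧ S.R b s t then w s * w t else 0) := by
        simp only [dotProduct, Matrix.mulVec, Finset.mul_sum]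
        refine Finset.sum_congr rfl fun s _ => Finset.sum_congr rfl fun t _ => ?_
        rw [hM]
        rcases Classical.em (S.R i x s) with hs|hs <;>
          rcases Classical.em (S.R i x t) with ht|ht <;>
          rcases Classical.em (S.R b s t) with hb'|hb' <;>
          simp [hs, ht, hb'] <;> ring
      rw [hdot] at h
      have houter : ∀ s ∈ Finset.univ, s ∉ ({u, c} : Finset X) →
          ∑ t, (if S.R i x s ∧ S.R i x t ∧ S.R b s t then w s * w t else (0:F)) = 0 := by
        intro s _ hs
        refine Finset.sum_eq_zero fun t _ => if_neg ?_
        rintro ⟨h1, -, -⟩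
        exact hnotin s hs h1
      rw [← Finset.sum_subset (Finset.subset_univ ({u, c} : Finset X)) houter] at h
      have hinner : ∀ s : X, ∑ t, (if S.R i x s ∧ S.R i x t ∧ S.R b s t then w s * w t else (0:F))
          = ∑ t ∈ ({u, c} : Finset X), (if S.R i x s ∧ S.R i x t ∧ S.R b s t then w s * w t else (0:F)) := by
        intro s
        refine (Finset.sum_subset (Finset.subset_univ ({u, c} : Finset X)) ?_).symm
        intro t _ ht
        refine if_neg ?_
        rintro ⟨-, h2, -⟩
        exact hnotin t ht h2
      simp only [hinner] at h
      rw [Finset.sum_pair huc, Finset.sum_pair huc, Finset.sum_pair huc] at h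
      rw [if_neg, if_pos, if_pos, if_neg] at h
      · linear_combination h
      · rintro ⟨-, -, h3⟩
        exact S.not_R_self hb0 c h3
      · exact ⟨hcR, hiu, hbcu⟩
      · exact ⟨hiu, hcR, hbuc⟩
      · rintro ⟨-, -, h3⟩
        exact S.not_R_self hb0 u h3
    have h2 : (2:F) * (w u * w c) = 0 := by linear_combination e2
    have hq : w u * w c = 0 := by
      rcases mul_eq_zero.mp h2 with h | h
      · exact absurd h (Ring.two_ne_zero hchar)
      · exact h
    rcases mul_eq_zero.mp hq with h | h
    · exact h
    · have : w u * w u = 0 := by rw [h] at e1'; linear_combination e1' 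
      exact mul_self_eq_zero.mp this

end AssocScheme

namespace AssocScheme
open Matrix

set_option linter.unusedSectionVars false

section Alg

variable {X : Type} [Fintype X] [DecidableEq X] {d : ℕ} (S : AssocScheme X d)
variable (F : Type) [Field F] (x : X)

lemma adj_transpose (b : Fin (d+1)) : (S.adj F b)ᵀ = S.adj F (S.inv b) := by
  ext u v
  simp only [Matrix.transpose_apply, adj, Matrix.of_apply]
  exact if_congr (S.inv_spec b u v).symm rfl rfl

lemma dualIdem_transpose (a : Fin (d+1)) : (S.dualIdem F x a)ᵀ = S.dualIdem F x a :=
  Matrix.diagonal_transpose _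

lemma transpose_mem {A : Matrix X X F} (hA : A ∈ S.Terw F x) : Aᵀ ∈ S.Terw F x := by
  refine Algebra.adjoin_induction (p := fun y _ => yᵀ ∈ S.Terw F x) ?_ ?_ ?_ ?_ hA
  · rintro y (⟨b, rfl⟩ | ⟨a, rfl⟩)
    · rw [S.adj_transpose]; exact S.adj_mem F x _
    · rw [S.dualIdem_transpose]; exact S.dualIdem_mem F x _
  · intro r
    have h : (algebraMap F (Matrix X X F) r)ᵀ = algebraMap F (Matrix X X F) r := by
      rw [Algebra.algebraMap_eq_smul_one, Matrix.transpose_smul, Matrix.transpose_one]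
    rw [h]
    exact Subalgebra.algebraMap_mem _ r
  · intro y z _ _ hy hz
    rw [Matrix.transpose_add]
    exact add_mem hy hz
  · intro y z _ _ hy hz
    rw [Matrix.transpose_mul]
    exact mul_mem hz hy

noncomputable instance terwSMul : SMul (S.Terw F x) (X → F) :=
  ⟨fun A v => (A : Matrix X X F).mulVec v⟩

lemma terw_smul_def (A : S.Terw F x) (v : X → F) : A • v = (A : Matrix X X F).mulVec v := rfl

noncomputable instance terwModule : Module (S.Terw F x) (X → F) where
  one_smul v := by
    show ((1 : S.Terw F x) : Matrix X X F).mulVec v = v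
    rw [OneMemClass.coe_one, Matrix.one_mulVec]
  mul_smul A B v := by
    show ((A * B : S.Terw F x) : Matrix X X F).mulVec v = _
    rw [MulMemClass.coe_mul, ← Matrix.mulVec_mulVec]
    rfl
  smul_zero A := by
    show Matrix.mulVec _ (0 : X → F) = 0
    rw [Matrix.mulVec_zero]
  smul_add A u v := by
    show Matrix.mulVec _ (u + v) = _
    rw [Matrix.mulVec_add]
    rfl
  add_smul A B v := by
    show ((A + B : S.Terw F x) : Matrix X X F).mulVec v = _
    rw [AddMemClass.coe_add, Matrix.add_mulVec]
    rfl
  zero_smul v := by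
    show ((0 : S.Terw F x) : Matrix X X F).mulVec v = 0
    rw [ZeroMemClass.coe_zero, Matrix.zero_mulVec]

instance : IsScalarTower F (S.Terw F x) (X → F) :=
  ⟨fun c A v => by
    show ((c • A : S.Terw F x) : Matrix X X F).mulVec v = c • ((A : Matrix X X F).mulVec v)
    rw [SetLike.val_smul, Matrix.smul_mulVec]⟩

end Alg

/-- the dot-product bilinear form on `X → F` -/
noncomputable def dotForm (X F : Type) [Fintype X] [Field F] :
    LinearMap.BilinForm F (X → F) :=
  LinearMap.mk₂ F (fun v w => dotProduct v w)
    (fun a b c => add_dotProduct a b c)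
    (fun r a b => smul_dotProduct r a b)
    (fun a b c => dotProduct_add a b c)
    (fun r a b => dotProduct_smul r a b)

lemma dotForm_apply {X F : Type} [Fintype X] [Field F] (v w : X → F) :
    dotForm X F v w = dotProduct v w := rfl

lemma dotForm_isRefl (X F : Type) [Fintype X] [Field F] : (dotForm X F).IsRefl := by
  intro v w h
  rw [dotForm_apply, dotProduct_comm]
  exact h

section SS

variable {X : Type} [Fintype X] [DecidableEq X] {d : ℕ} (S : AssocScheme X d)
variable (F : Type) [Field F] (x : X)

/-- the orthogonal complement of a `T`-submodule is a `T`-submodule -/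
noncomputable def perp (W : Submodule (S.Terw F x) (X → F)) :
    Submodule (S.Terw F x) (X → F) where
  carrier := (dotForm X F).orthogonal (Submodule.restrictScalars F W)
  add_mem' := fun ha hb => Submodule.add_mem _ ha hb
  zero_mem' := Submodule.zero_mem _
  smul_mem' := by
    intro A v hv
    rw [SetLike.mem_coe, LinearMap.BilinForm.mem_orthogonal_iff] at hv ⊢
    intro n hn
    show dotForm X F n (A • v) = 0
    rw [terw_smul_def, dotForm_apply, Matrix.dotProduct_mulVec,
      ← Matrix.mulVec_transpose]
    have hmem : ((⟨(A : Matrix X X F)ᵀ, S.transpose_mem F x A.2⟩ : S.Terw F x) • n)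
        ∈ Submodule.restrictScalars F W := W.smul_mem _ hn
    exact hv _ hmem
  end SS

section SS2

open Matrix

variable {X : Type} [Fintype X] [DecidableEq X] {d : ℕ} (S : AssocScheme X d)
variable (F : Type) [Field F] (x : X)

set_option maxHeartbeats 1000000 in
set_option synthInstance.maxHeartbeats 400000 in
lemma isSemisimpleModule_std (hqt : ∀ a, S.k a ≤ 2) (hchar : ringChar F ≠ 2) :
    IsSemisimpleModule (S.Terw F x) (X → F) := by
  refine { exists_isCompl := ?_ }
  intro W
  have hrefl : (dotForm X F).IsRefl := dotForm_isRefl X F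
  have hnd : ((dotForm X F).restrict (Submodule.restrictScalars F W)).Nondegenerate := by
    refine (LinearMap.IsRefl.nondegenerate_iff_separatingLeft (hrefl.domRestrict _)).mpr ?_
    rintro ⟨w, hwW⟩ hwall
    have hzero : w = 0 := by
      refine S.isotropic_zero F x hqt hchar w fun A hA => ?_
      have hmem : ((⟨A, hA⟩ : S.Terw F x) • w) ∈ Submodule.restrictScalars F W :=
        W.smul_mem _ hwW
      exact hwall ⟨(⟨A, hA⟩ : S.Terw F x) • w, hmem⟩
    exact Subtype.ext hzero
  have hc := LinearMap.BilinForm.isCompl_orthogonal_of_restrict_nondegenerate hrefl hnd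
  refine ⟨S.perp F x W, ?_, ?_⟩
  · rw [Submodule.disjoint_def]
    intro a haW haP
    exact Submodule.disjoint_def.mp hc.disjoint a haW haP
  · rw [codisjoint_iff, eq_top_iff]
    intro v _
    have hv : v ∈ (Submodule.restrictScalars F W) ⊔
        (dotForm X F).orthogonal (Submodule.restrictScalars F W) := by
      rw [hc.codisjoint.eq_top]; trivial
    obtain ⟨a, ha, b, hb, rfl⟩ := Submodule.mem_sup.mp hv
    exact Submodule.mem_sup.mpr ⟨a, ha, b, hb, rfl⟩

set_option maxHeartbeats 1000000 in
set_option synthInstance.maxHeartbeats 400000 in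
lemma isSemisimpleRing_Terw (hqt : ∀ a, S.k a ≤ 2) (hchar : ringChar F ≠ 2) :
    IsSemisimpleRing (S.Terw F x) := by
  haveI hV : IsSemisimpleModule (S.Terw F x) (X → F) :=
    S.isSemisimpleModule_std F x hqt hchar
  haveI hPi : IsSemisimpleModule (S.Terw F x) (X → (X → F)) := by
    refine isSemisimpleModule_of_isSemisimpleModule_submodule'
      (p := fun u => LinearMap.range
        (LinearMap.single (S.Terw F x) (fun _ : X => (X → F)) u)) (fun u => ?_) ?_
    · exact IsSemisimpleModule.range (LinearMap.single (S.Terw F x) (fun _ : X => (X → F)) u)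
    · rw [eq_top_iff]
      intro v _
      rw [← Finset.univ_sum_single v]
      exact Submodule.sum_mem _ fun u _ => Submodule.mem_iSup_of_mem u ⟨v u, rfl⟩
  let φ : (S.Terw F x) →ₗ[S.Terw F x] (X → (X → F)) :=
    { toFun := fun t => fun u => t • (Pi.single u 1)
      map_add' := fun a b => by funext u; exact add_smul a b _
      map_smul' := fun c t => by funext u; exact mul_smul c t _ }
  have hinj : Function.Injective φ := by
    intro s t hst
    apply Subtype.ext
    ext a b
    have h1 : (s : Matrix X X F).mulVec (Pi.single b 1)
        = (t : Matrix X X F).mulVec (Pi.single b 1) := congrFun hst b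
    rw [Matrix.mulVec_single_one, Matrix.mulVec_single_one] at h1
    exact congrFun h1 a
  haveI hrg : IsSemisimpleModule (S.Terw F x) (LinearMap.range φ) :=
    IsSemisimpleModule.submodule _ _
  exact IsSemisimpleModule.congr (M := LinearMap.range φ) (LinearEquiv.ofInjective φ hinj)

lemma jacobson_bot_of_isSemisimpleRing (R : Type*) [Ring R] [IsSemisimpleRing R] :
    Ideal.jacobson (⊥ : Ideal R) = ⊥ := by
  obtain ⟨c, hc⟩ := exists_isCompl (Ideal.jacobson (⊥ : Ideal R))
  rcases eq_or_ne c ⊤ with rfl | hct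
  · have h := hc.inf_eq_bot
    rwa [inf_top_eq] at h
  · obtain ⟨m, hm, hcm⟩ := (IsCoatomic.eq_top_or_exists_le_coatom c).resolve_left hct
    have hJm : Ideal.jacobson (⊥ : Ideal R) ≤ m :=
      sInf_le ⟨bot_le, Ideal.isMaximal_def.mpr hm⟩
    have htop : (⊤ : Ideal R) ≤ m := by
      rw [← hc.sup_eq_top]
      exact sup_le hJm hcm
    exact absurd (top_le_iff.mp htop) hm.1

end SS2

end AssocScheme


/-- the Terwilliger algebra of a quasi-thin scheme over a field of
characteristic `≠ 2` is semisimple (its Jacobson radical is zero). -/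
theorem stmt_14 {X : Type} [Fintype X] [DecidableEq X] {d : ℕ} (S : AssocScheme X d)
    (F : Type) [Field F] (x : X) (hqt : ∀ a, S.k a ≤ 2) (hchar : ringChar F ≠ 2) :
    Ideal.jacobson (⊥ : Ideal (S.Terw F x)) = ⊥ ∧ IsSemisimpleRing (S.Terw F x) := by
  haveI hss : IsSemisimpleRing (S.Terw F x) := S.isSemisimpleRing_Terw F x hqt hchar
  exact ⟨AssocScheme.jacobson_bot_of_isSemisimpleRing _, hss⟩
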